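/- arXiv:2209.14346 — 2 statements merged into one kernel-verified Lean document; each statement's English description precedes it below -/
import Mathlib

section
/- Let μ be a finite Borel measure on ℝ^{n+1}, let R₀ be a Borel set with μ(R₀) > 0, and let {Q_i}_{i∈I} be a countable family of pairwise disjoint Borel subsets of R₀. Let f : ℝ^{n+1} → ℝ^{n+1} be μ-integrable on R₀, let α > 0, ε > 0, let v₀ ∈ ℝ^{n+1}, and for each i let v_i ∈ ℝ^{n+1} satisfy |v_i − v₀| ≥ α. Assume ∫_{R₀} |f − v₀| dμ ≤ ε² μ(R₀) and, for every i ∈ I, ∫_{Q_i} |f − v_i| dμ ≤ ε² μ(Q_i). Then μ(⋃_{i∈I} Q_i) ≤ (2ε²/α) μ(R₀). -/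
open MeasureTheory Set

/-- **Measure-theoretic core of Lemma 3.2** of Tolsa–Toro, "The two-phase problem for harmonic
measure in VMO and the chord-arc condition": if `f` has mean oscillation `≤ ε²` around `v₀` on
`R₀` and around `v i` on each of the pairwise disjoint subsets `Q i ⊆ R₀`, and each `v i` is
`α`-far from `v₀`, then `μ(⋃ i, Q i) ≤ (2ε²/α) μ(R₀)`. -/
theorem bigSlope_stopping_bound (n : ℕ)
    (μ : Measure (EuclideanSpace ℝ (Fin (n + 1)))) [IsFiniteMeasure μ]
    (R₀ : Set (EuclideanSpace ℝ (Fin (n + 1)))) (hR₀ : MeasurableSet R₀)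
    (hμR₀ : 0 < μ R₀)
    (I : Type*) [Countable I] (Q : I → Set (EuclideanSpace ℝ (Fin (n + 1))))
    (hQmeas : ∀ i, MeasurableSet (Q i)) (hQsub : ∀ i, Q i ⊆ R₀)
    (hQdisj : ∀ i j, i ≠ j → Disjoint (Q i) (Q j))
    (f : EuclideanSpace ℝ (Fin (n + 1)) → EuclideanSpace ℝ (Fin (n + 1)))
    (hf : IntegrableOn f R₀ μ)
    (α ε : ℝ) (hα : 0 < α) (hε : 0 < ε)
    (v₀ : EuclideanSpace ℝ (Fin (n + 1))) (v : I → EuclideanSpace ℝ (Fin (n + 1)))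
    (hv : ∀ i, α ≤ ‖v i - v₀‖)
    (hosc₀ : ∫ x in R₀, ‖f x - v₀‖ ∂μ ≤ ε ^ 2 * (μ R₀).toReal)
    (hosc : ∀ i, ∫ x in Q i, ‖f x - v i‖ ∂μ ≤ ε ^ 2 * (μ (Q i)).toReal) :
    (μ (⋃ i, Q i)).toReal ≤ 2 * ε ^ 2 / α * (μ R₀).toReal := by
  classical
  set U := ⋃ i, Q i with hU_def
  have hUmeas : MeasurableSet U := MeasurableSet.iUnion hQmeas
  have hUsub : U ⊆ R₀ := iUnion_subset hQsub
  have hd : Pairwise (Function.onFun Disjoint Q) := fun i j hij => hQdisj i j hij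
  have hμU : μ U = ∑' i, μ (Q i) := measure_iUnion hd hQmeas
  have hμU_ne : μ U ≠ ⊤ := measure_ne_top μ U
  have hsumμ : Summable fun i => (μ (Q i)).toReal := by
    apply ENNReal.summable_toReal
    rw [← hμU]; exact hμU_ne
  have htsμ : (μ U).toReal = ∑' i, (μ (Q i)).toReal := by
    rw [hμU, ENNReal.tsum_toReal_eq (fun i => measure_ne_top μ _)]
  -- integrability of oscillation functions
  have hg0 : IntegrableOn (fun x => ‖f x - v₀‖) R₀ μ := by
    exact (hf.sub (integrableOn_const (measure_ne_top μ R₀))).norm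
  have hgU : IntegrableOn (fun x => ‖f x - v₀‖) U μ := hg0.mono_set hUsub
  have hgQ : ∀ i, IntegrableOn (fun x => ‖f x - v₀‖) (Q i) μ :=
    fun i => hg0.mono_set (hQsub i)
  have hgiQ : ∀ i, IntegrableOn (fun x => ‖f x - v i‖) (Q i) μ := by
    intro i
    exact ((hf.mono_set (hQsub i)).sub
      (integrableOn_const (measure_ne_top μ (Q i)))).norm
  -- key per-cube estimate
  have hKey : ∀ i, α * (μ (Q i)).toReal ≤
      (∫ x in Q i, ‖f x - v₀‖ ∂μ) + ε ^ 2 * (μ (Q i)).toReal := by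
    intro i
    have hpt : ∀ x ∈ Q i, α ≤ ‖f x - v i‖ + ‖f x - v₀‖ := by
      intro x hx
      calc α ≤ ‖v i - v₀‖ := hv i
        _ = ‖(v i - f x) + (f x - v₀)‖ := by rw [sub_add_sub_cancel]
        _ ≤ ‖v i - f x‖ + ‖f x - v₀‖ := norm_add_le _ _
        _ = ‖f x - v i‖ + ‖f x - v₀‖ := by rw [norm_sub_rev]
    have hconst : ∫ _x in Q i, α ∂μ = (μ (Q i)).toReal * α := by
      rw [setIntegral_const, smul_eq_mul]; rfl
    have hmono : ∫ _x in Q i, α ∂μ ≤ ∫ x in Q i, (‖f x - v i‖ + ‖f x - v₀‖) ∂μ := by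
      apply setIntegral_mono_on (integrableOn_const (measure_ne_top μ (Q i)))
        ((hgiQ i).add (hgQ i)) (hQmeas i) hpt
    rw [integral_add (hgiQ i) (hgQ i)] at hmono
    have := hosc i
    calc α * (μ (Q i)).toReal = ∫ _x in Q i, α ∂μ := by rw [hconst]; ring
      _ ≤ (∫ x in Q i, ‖f x - v i‖ ∂μ) + ∫ x in Q i, ‖f x - v₀‖ ∂μ := hmono
      _ ≤ ε ^ 2 * (μ (Q i)).toReal + ∫ x in Q i, ‖f x - v₀‖ ∂μ := by linarith
      _ = (∫ x in Q i, ‖f x - v₀‖ ∂μ) + ε ^ 2 * (μ (Q i)).toReal := by ring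
  have hHasSum : HasSum (fun i => ∫ x in Q i, ‖f x - v₀‖ ∂μ) (∫ x in U, ‖f x - v₀‖ ∂μ) :=
    hasSum_integral_iUnion hQmeas hd hgU
  have hsumInt : Summable fun i => ∫ x in Q i, ‖f x - v₀‖ ∂μ := hHasSum.summable
  have hRHSsum : Summable fun i => (∫ x in Q i, ‖f x - v₀‖ ∂μ) + ε ^ 2 * (μ (Q i)).toReal :=
    hsumInt.add (hsumμ.mul_left _)
  have hLHSsum : Summable fun i => α * (μ (Q i)).toReal := hsumμ.mul_left _
  have hmain : α * (μ U).toReal ≤ (∫ x in U, ‖f x - v₀‖ ∂μ) + ε ^ 2 * (μ U).toReal := by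
    rw [htsμ, ← tsum_mul_left]
    calc ∑' i, α * (μ (Q i)).toReal
        ≤ ∑' i, ((∫ x in Q i, ‖f x - v₀‖ ∂μ) + ε ^ 2 * (μ (Q i)).toReal) :=
          Summable.tsum_le_tsum hKey hLHSsum hRHSsum
      _ = (∑' i, ∫ x in Q i, ‖f x - v₀‖ ∂μ) + ∑' i, ε ^ 2 * (μ (Q i)).toReal :=
          Summable.tsum_add hsumInt (hsumμ.mul_left _)
      _ = (∫ x in U, ‖f x - v₀‖ ∂μ) + ε ^ 2 * ∑' i, (μ (Q i)).toReal := by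
          rw [hHasSum.tsum_eq, tsum_mul_left]
  have hIntU : ∫ x in U, ‖f x - v₀‖ ∂μ ≤ ∫ x in R₀, ‖f x - v₀‖ ∂μ := by
    apply setIntegral_mono_set hg0 (Filter.Eventually.of_forall fun x => norm_nonneg _)
      (HasSubset.Subset.eventuallyLE hUsub)
  have hμUR : (μ U).toReal ≤ (μ R₀).toReal :=
    ENNReal.toReal_mono (measure_ne_top μ R₀) (measure_mono hUsub)
  have hεsq : 0 < ε ^ 2 := by positivity
  have hμR₀' : 0 ≤ (μ R₀).toReal := ENNReal.toReal_nonneg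
  have hfinal : α * (μ U).toReal ≤ 2 * ε ^ 2 * (μ R₀).toReal := by nlinarith
  rw [div_mul_eq_mul_div, le_div_iff₀ hα]
  linarith [hfinal]
end

section
/- Let f : ℝⁿ → ℝ be 1-Lipschitz with graph Γ = {(x, f(x)) : x ∈ ℝⁿ} ⊆ ℝ^{n+1}, let G ⊆ Γ, let x₀ ∈ ℝ^{n+1} and R > 0, and let {B(x_i, r_i)}_{i∈I} be a countable family of pairwise disjoint balls contained in B(x₀, R), each disjoint from G, and such that B(x_i, r_i/2) ∩ Γ ≠ ∅ for every i. Then Σ_{i∈I} r_iⁿ ≤ C(n) ℋⁿ(Γ ∩ B(x₀, R) \ G), where C(n) depends only on n. -/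
open Metric Set MeasureTheory Module
open scoped ENNReal NNReal

/-- The graph `Γ = {(x, f(x)) : x ∈ ℝⁿ} ⊆ ℝ^{n+1}` of a function `f : ℝⁿ → ℝ`, where
`ℝ^{n+1}` is identified with `ℝⁿ × ℝ` via the first `n` coordinates and the last one. -/
def graphSet (n : ℕ) (f : EuclideanSpace ℝ (Fin n) → ℝ) :
    Set (EuclideanSpace ℝ (Fin (n + 1))) :=
  {p | p (Fin.last n) = f (WithLp.toLp 2 (fun i : Fin n => p (Fin.castSucc i)))}

/-- **Packing inequality (4.23) of Tolsa–Toro**: if `f : ℝⁿ → ℝ` is `1`-Lipschitz with graph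
`Γ`, `G ⊆ Γ`, and `{B(x_i, r_i)}_{i}` is a countable family of pairwise disjoint balls
contained in `B(x₀, R)`, each disjoint from `G`, and with `B(x_i, r_i/2) ∩ Γ ≠ ∅`, then
`Σ_i r_iⁿ ≤ C(n) ℋⁿ(Γ ∩ B(x₀,R) \ G)`. -/
theorem packing_balls_on_graph (n : ℕ) :
    ∃ C : ℝ, 0 < C ∧
      ∀ f : EuclideanSpace ℝ (Fin n) → ℝ, LipschitzWith 1 f →
      ∀ G : Set (EuclideanSpace ℝ (Fin (n + 1))), G ⊆ graphSet n f →
      ∀ (x₀ : EuclideanSpace ℝ (Fin (n + 1))) (R : ℝ), 0 < R →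
      ∀ (I : Type) (_ : Countable I)
        (x : I → EuclideanSpace ℝ (Fin (n + 1))) (r : I → ℝ),
        (∀ i j, i ≠ j → Disjoint (ball (x i) (r i)) (ball (x j) (r j))) →
        (∀ i, ball (x i) (r i) ⊆ ball x₀ R) →
        (∀ i, Disjoint (ball (x i) (r i)) G) →
        (∀ i, (ball (x i) (r i / 2) ∩ graphSet n f).Nonempty) →
        ∑' i, ENNReal.ofReal (r i ^ n)
          ≤ ENNReal.ofReal C * μH[(n : ℝ)] ((graphSet n f ∩ ball x₀ R) \ G) := by
  classical
  set μ : Measure (EuclideanSpace ℝ (Fin n)) := μH[(n : ℝ)] with hμ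
  haveI : μ.IsAddHaarMeasure := by
    rw [hμ]
    have h : ((finrank ℝ (EuclideanSpace ℝ (Fin n)) : ℕ) : ℝ) = (n : ℝ) := by
      rw [finrank_euclideanSpace_fin]
    exact h ▸ MeasureTheory.isAddHaarMeasure_hausdorffMeasure
  have hs2 : (0 : ℝ) < Real.sqrt 2 := Real.sqrt_pos.2 (by norm_num)
  set k : ℝ≥0∞ := ENNReal.ofReal ((2 * Real.sqrt 2)⁻¹ ^ n) * μ (ball 0 1) with hk
  have hk0 : k ≠ 0 := by
    refine mul_ne_zero ?_ ?_
    · exact (ENNReal.ofReal_pos.2 (by positivity)).ne'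
    · exact (measure_ball_pos μ 0 one_pos).ne'
  have hktop : k ≠ ∞ := ENNReal.mul_ne_top ENNReal.ofReal_ne_top measure_ball_lt_top.ne
  have hkR : 0 < k.toReal := ENNReal.toReal_pos hk0 hktop
  refine ⟨(k.toReal)⁻¹, inv_pos.2 hkR, ?_⟩
  intro f hf G hG x₀ R hR I hI x r hdisj hsub hdG hne
  -- the projection onto the first `n` coordinates
  set π : EuclideanSpace ℝ (Fin (n + 1)) → EuclideanSpace ℝ (Fin n) :=
    fun p => WithLp.toLp 2 (fun i : Fin n => p (Fin.castSucc i)) with hπdef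
  have hπ : LipschitzWith 1 π := by
    apply LipschitzWith.of_dist_le_mul
    intro p q
    rw [NNReal.coe_one, one_mul, EuclideanSpace.dist_eq, EuclideanSpace.dist_eq]
    apply Real.sqrt_le_sqrt
    rw [Fin.sum_univ_castSucc]
    exact le_add_of_nonneg_right (by positivity)
  -- the graph map
  set ι : EuclideanSpace ℝ (Fin n) → EuclideanSpace ℝ (Fin (n + 1)) :=
    fun z => WithLp.toLp 2 (Fin.snoc (α := fun _ => ℝ) z.ofLp (f z)) with hιdef
  have hca : ∀ (z : EuclideanSpace ℝ (Fin n)) (i : Fin n),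
      (ι z) (Fin.castSucc i) = z i := by
    intro z i
    show (Fin.snoc (α := fun _ => ℝ) z.ofLp (f z)) (Fin.castSucc i) = z i
    simp [Fin.snoc_castSucc]
  have hla : ∀ (z : EuclideanSpace ℝ (Fin n)), (ι z) (Fin.last n) = f z := by
    intro z
    show (Fin.snoc (α := fun _ => ℝ) z.ofLp (f z)) (Fin.last n) = f z
    simp [Fin.snoc_last]
  have hιπ : ∀ z, π (ι z) = z := by
    intro z; ext i
    exact hca z i
  have hιΓ : ∀ z, ι z ∈ graphSet n f := by
    intro z
    show (ι z) (Fin.last n) = f (WithLp.toLp 2 (fun i => (ι z) (Fin.castSucc i)))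
    rw [hla]
    congr 1
    ext i
    exact (hca z i).symm
  have hyι : ∀ y ∈ graphSet n f, ι (π y) = y := by
    intro y hy; ext j
    refine Fin.lastCases ?_ ?_ j
    · show (ι (π y)) (Fin.last n) = y (Fin.last n)
      rw [hla]
      exact hy.symm
    · intro i
      show (ι (π y)) (Fin.castSucc i) = y (Fin.castSucc i)
      rw [hca]
  have hιdist : ∀ z w, dist (ι z) (ι w) ≤ Real.sqrt 2 * dist z w := by
    intro z w
    have hzw : (∑ i : Fin n, dist (z i) (w i) ^ 2) = dist z w ^ 2 := by
      rw [EuclideanSpace.dist_eq, Real.sq_sqrt (by positivity)]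
    have hfl : dist (f z) (f w) ≤ dist z w := by
      simpa using hf.dist_le_mul z w
    have h1 : dist (ι z) (ι w)
        = Real.sqrt ((∑ i : Fin n, dist (z i) (w i) ^ 2) + dist (f z) (f w) ^ 2) := by
      rw [EuclideanSpace.dist_eq, Fin.sum_univ_castSucc]
      simp only [hca, hla]
    rw [h1, hzw]
    have h2 : dist (f z) (f w) ^ 2 ≤ dist z w ^ 2 := by
      exact pow_le_pow_left₀ dist_nonneg hfl 2
    calc Real.sqrt (dist z w ^ 2 + dist (f z) (f w) ^ 2)
        ≤ Real.sqrt (2 * dist z w ^ 2) := by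
          apply Real.sqrt_le_sqrt; nlinarith
      _ = Real.sqrt 2 * dist z w := by
          rw [Real.sqrt_mul (by norm_num), Real.sqrt_sq dist_nonneg]
  -- key per-ball estimate
  have key : ∀ i, ENNReal.ofReal (r i ^ n) * k
      ≤ μH[(n : ℝ)] (graphSet n f ∩ ball (x i) (r i)) := by
    intro i
    obtain ⟨y, hyb, hyΓ⟩ := hne i
    have hyb' : dist y (x i) < r i / 2 := mem_ball.1 hyb
    have hri : 0 < r i := by
      have : (0 : ℝ) ≤ dist y (x i) := dist_nonneg; linarith
    set ρ : ℝ := r i / (2 * Real.sqrt 2) with hρ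
    have hρpos : 0 < ρ := by positivity
    have hsub2 : ball (π y) ρ ⊆ π '' (graphSet n f ∩ ball (x i) (r i)) := by
      intro z hz
      refine ⟨ι z, ⟨hιΓ z, ?_⟩, hιπ z⟩
      have h1 : dist (ι z) y < r i / 2 := by
        have := hιdist z (π y)
        rw [hyι y hyΓ] at this
        calc dist (ι z) y ≤ Real.sqrt 2 * dist z (π y) := this
          _ < Real.sqrt 2 * ρ := by
              exact mul_lt_mul_of_pos_left (mem_ball.1 hz) hs2
          _ = r i / 2 := by
              rw [hρ]
              field_simp
      have : dist (ι z) (x i) < r i :=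
        calc dist (ι z) (x i) ≤ dist (ι z) y + dist y (x i) := dist_triangle _ _ _
          _ < r i / 2 + r i / 2 := add_lt_add h1 hyb'
          _ = r i := by ring
      exact mem_ball.2 this
    have h3 : μ (ball (π y) ρ) ≤ μH[(n : ℝ)] (graphSet n f ∩ ball (x i) (r i)) := by
      calc μ (ball (π y) ρ) ≤ μ (π '' (graphSet n f ∩ ball (x i) (r i))) :=
            measure_mono hsub2
        _ ≤ ((1 : ℝ≥0) : ℝ≥0∞) ^ (n : ℝ) * μH[(n : ℝ)] (graphSet n f ∩ ball (x i) (r i)) :=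
            hπ.hausdorffMeasure_image_le (by positivity) _
        _ = μH[(n : ℝ)] (graphSet n f ∩ ball (x i) (r i)) := by
            rw [ENNReal.coe_one, ENNReal.one_rpow, one_mul]
    have h4 : μ (ball (π y) ρ) = ENNReal.ofReal (ρ ^ n) * μ (ball 0 1) := by
      rw [Measure.addHaar_ball_of_pos μ _ hρpos, finrank_euclideanSpace_fin]
    have h5 : ENNReal.ofReal (r i ^ n) * k = μ (ball (π y) ρ) := by
      rw [h4, hk, ← mul_assoc, ← ENNReal.ofReal_mul (by positivity)]
      congr 2
      rw [← mul_pow, hρ, div_eq_mul_inv]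
    rw [h5]; exact h3
  -- measurability and disjointness of the pieces
  have hΓclosed : IsClosed (graphSet n f) := by
    have h1 : LipschitzWith 1 (fun p : EuclideanSpace ℝ (Fin (n + 1)) => p (Fin.last n)) := by
      apply LipschitzWith.of_dist_le_mul
      intro p q
      have h0 : (0 : ℝ) ≤ dist (p (Fin.last n)) (q (Fin.last n)) := dist_nonneg
      rw [NNReal.coe_one, one_mul, EuclideanSpace.dist_eq, ← Real.sqrt_sq h0]
      apply Real.sqrt_le_sqrt
      exact Finset.single_le_sum (f := fun j => dist (p j) (q j) ^ 2)
        (fun j _ => by positivity) (Finset.mem_univ _)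
    exact isClosed_eq h1.continuous (hf.continuous.comp hπ.continuous)
  have hmeas : ∀ i, MeasurableSet (graphSet n f ∩ ball (x i) (r i)) :=
    fun i => hΓclosed.measurableSet.inter measurableSet_ball
  have hdisj' : Pairwise (Function.onFun Disjoint
      fun i => graphSet n f ∩ ball (x i) (r i)) := by
    intro i j hij
    exact Disjoint.mono inter_subset_right inter_subset_right (hdisj i j hij)
  have hU : (⋃ i, graphSet n f ∩ ball (x i) (r i)) ⊆ (graphSet n f ∩ ball x₀ R) \ G := by
    intro p hp
    obtain ⟨i, hpΓ, hpb⟩ := mem_iUnion.1 hp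
    exact ⟨⟨hpΓ, hsub i hpb⟩, fun hpG => (Set.disjoint_left.1 (hdG i)) hpb hpG⟩
  have hchain : (∑' i, ENNReal.ofReal (r i ^ n)) * k
      ≤ μH[(n : ℝ)] ((graphSet n f ∩ ball x₀ R) \ G) := by
    rw [← ENNReal.tsum_mul_right]
    calc (∑' i, ENNReal.ofReal (r i ^ n) * k)
        ≤ ∑' i, μH[(n : ℝ)] (graphSet n f ∩ ball (x i) (r i)) :=
          ENNReal.tsum_le_tsum key
      _ = μH[(n : ℝ)] (⋃ i, graphSet n f ∩ ball (x i) (r i)) :=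
          (measure_iUnion hdisj' hmeas).symm
      _ ≤ μH[(n : ℝ)] ((graphSet n f ∩ ball x₀ R) \ G) := measure_mono hU
  have hC : ENNReal.ofReal (k.toReal)⁻¹ = k⁻¹ := by
    rw [ENNReal.ofReal_inv_of_pos hkR, ENNReal.ofReal_toReal hktop]
  calc (∑' i, ENNReal.ofReal (r i ^ n))
      = (∑' i, ENNReal.ofReal (r i ^ n)) * k * k⁻¹ := by
        rw [mul_assoc, ENNReal.mul_inv_cancel hk0 hktop, mul_one]
    _ ≤ μH[(n : ℝ)] ((graphSet n f ∩ ball x₀ R) \ G) * k⁻¹ := by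
        exact mul_le_mul_left hchain _
    _ = ENNReal.ofReal (k.toReal)⁻¹ * μH[(n : ℝ)] ((graphSet n f ∩ ball x₀ R) \ G) := by
        rw [hC, mul_comm]
end
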